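/- arXiv:2402.15489 — 2 statements merged into one kernel-verified Lean document; each statement's English description precedes it below -/
import Mathlib

section
/- Let B ∈ ℝ^{K×K} be symmetric with full rank K, written B = ν I_{p,q} νᵀ with ν ∈ ℝ^{K×K} invertible and I_{p,q} = diag(1,…,1,−1,…,−1) (p + q = K), and let π ∈ ℝ^K have strictly positive entries. Set Δ := νᵀ diag(π) ν. Then: (i) writing ν = V|Σ|^{1/2} with V ∈ ℝ^{K×K} orthogonal, the projection Π̃ := I_K − V(Vᵀ diag(π)V)⁻¹Vᵀ diag(π) equals the zero matrix; and (ii) for every diagonal matrix G ∈ ℝ^{K×K} — in particular for G = diag((B∘(J−B))π) (dense regime) and G = diag(Bπ) (sparse regime) — the bias matrix Θ := G ν Δ⁻¹ I_{p,q} Δ⁻¹ νᵀ + ν Δ⁻¹ I_{p,q} Δ⁻¹ νᵀ G − ν Δ⁻¹ νᵀ diag(π) G ν Δ⁻¹ I_{p,q} Δ⁻¹ νᵀ − ν Δ⁻¹ I_{p,q} Δ⁻¹ νᵀ G diag(π) ν Δ⁻¹ νᵀ equals the zero matrix. -/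
open Matrix

noncomputable section

lemma aux_inv {K : ℕ} (A D : Matrix (Fin K) (Fin K) ℝ)
    (hA : IsUnit A.det) (hD : IsUnit D.det) :
    A * (A.transpose * D * A)⁻¹ * A.transpose * D = 1 := by
  have hAt : IsUnit A.transpose.det := by rwa [Matrix.det_transpose]
  rw [Matrix.mul_inv_rev, Matrix.mul_inv_rev]
  calc A * (A⁻¹ * (D⁻¹ * A.transpose⁻¹)) * A.transpose * D
      = (A * A⁻¹) * D⁻¹ * (A.transpose⁻¹ * A.transpose) * D := by
        noncomm_ring
    _ = 1 := by
        rw [Matrix.mul_nonsing_inv _ hA, Matrix.nonsing_inv_mul _ hAt,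
          Matrix.one_mul, Matrix.mul_one, Matrix.nonsing_inv_mul _ hD]

/-- if the block-connectivity matrix `B = ν I_{p,q} νᵀ` has full
rank `K` (so `ν` is an invertible `K × K` matrix), then (i) for any orthogonal
factor `V` (with `ν = V S`), the projection
`Π̃ = I_K − V (Vᵀ diag(π) V)⁻¹ Vᵀ diag(π)` vanishes, and (ii) for every
diagonal matrix `G = diagonal g` — in particular for `G = diag((B∘(J−B))π)`
(dense regime) and `G = diag(Bπ)` (sparse regime) — the bias matrix
`Θ = G ν Δ⁻¹ I_{p,q} Δ⁻¹ νᵀ + ν Δ⁻¹ I_{p,q} Δ⁻¹ νᵀ G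
  − ν Δ⁻¹ νᵀ diag(π) G ν Δ⁻¹ I_{p,q} Δ⁻¹ νᵀ
  − ν Δ⁻¹ I_{p,q} Δ⁻¹ νᵀ G diag(π) ν Δ⁻¹ νᵀ`
vanishes, where `Δ = νᵀ diag(π) ν`. -/
theorem fullRank_bias_vanishes {K p q : ℕ} (hK : 2 ≤ K) (hpq : p + q = K)
    (ν : Matrix (Fin K) (Fin K) ℝ) (hν : IsUnit ν.det)
    (B : Matrix (Fin K) (Fin K) ℝ) (hBsym : B.IsSymm) (hBrank : B.rank = K)
    (hBfac : B = ν * Matrix.diagonal (fun i : Fin K =>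
      if (i : ℕ) < p then (1 : ℝ) else -1) * ν.transpose)
    (π : Fin K → ℝ) (hπpos : ∀ k, 0 < π k) :
    (∀ V S : Matrix (Fin K) (Fin K) ℝ, V.transpose * V = 1 → ν = V * S →
      (1 : Matrix (Fin K) (Fin K) ℝ) -
        V * (V.transpose * Matrix.diagonal π * V)⁻¹ * V.transpose *
          Matrix.diagonal π = 0)
    ∧
    (∀ g : Fin K → ℝ,
      (Matrix.diagonal g *
          (ν * (ν.transpose * Matrix.diagonal π * ν)⁻¹ *
            Matrix.diagonal (fun i : Fin K => if (i : ℕ) < p then (1 : ℝ) else -1) *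
            (ν.transpose * Matrix.diagonal π * ν)⁻¹ * ν.transpose)
        + (ν * (ν.transpose * Matrix.diagonal π * ν)⁻¹ *
            Matrix.diagonal (fun i : Fin K => if (i : ℕ) < p then (1 : ℝ) else -1) *
            (ν.transpose * Matrix.diagonal π * ν)⁻¹ * ν.transpose) * Matrix.diagonal g
        - (ν * (ν.transpose * Matrix.diagonal π * ν)⁻¹ * ν.transpose) *
            Matrix.diagonal π * Matrix.diagonal g *
            (ν * (ν.transpose * Matrix.diagonal π * ν)⁻¹ *
              Matrix.diagonal (fun i : Fin K => if (i : ℕ) < p then (1 : ℝ) else -1) *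
              (ν.transpose * Matrix.diagonal π * ν)⁻¹ * ν.transpose)
        - (ν * (ν.transpose * Matrix.diagonal π * ν)⁻¹ *
            Matrix.diagonal (fun i : Fin K => if (i : ℕ) < p then (1 : ℝ) else -1) *
            (ν.transpose * Matrix.diagonal π * ν)⁻¹ * ν.transpose) *
            Matrix.diagonal g * Matrix.diagonal π *
            (ν * (ν.transpose * Matrix.diagonal π * ν)⁻¹ * ν.transpose)) = 0) := by
  have hD : IsUnit (Matrix.diagonal π).det := by
    rw [Matrix.det_diagonal]
    exact isUnit_iff_ne_zero.mpr (Finset.prod_ne_zero_iff.mpr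
      (fun k _ => ne_of_gt (hπpos k)))
  constructor
  · intro V S hVo _
    have hVdet : IsUnit V.det := by
      have h := congrArg Matrix.det hVo
      rw [Matrix.det_mul, Matrix.det_transpose, Matrix.det_one] at h
      exact IsUnit.of_mul_eq_one _ h
    rw [aux_inv V (Matrix.diagonal π) hVdet hD, sub_self]
  · intro g
    set D := Matrix.diagonal π with hDdef
    set I := Matrix.diagonal (fun i : Fin K => if (i : ℕ) < p then (1 : ℝ) else -1)
      with hIdef
    set N := ν * (ν.transpose * D * ν)⁻¹ * ν.transpose with hN
    set M := ν * (ν.transpose * D * ν)⁻¹ * I * (ν.transpose * D * ν)⁻¹ * ν.transpose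
      with hM
    have h1 : N * D = 1 := aux_inv ν D hν hD
    have h2 : D * N = 1 := by
      rw [mul_eq_one_comm] at h1; exact h1
    have e3 : N * D * Matrix.diagonal g * M = Matrix.diagonal g * M := by
      rw [h1, Matrix.one_mul]
    have e4 : M * Matrix.diagonal g * D * N = M * Matrix.diagonal g := by
      rw [Matrix.mul_assoc (M * Matrix.diagonal g), h2, Matrix.mul_one]
    rw [e3, e4]
    abel

end
end

section
/- Let K = 2, let 0 < p, q < 1, and let B = v vᵀ with v = (p, q)ᵀ, a rank-one symmetric positive semidefinite matrix (so d = 1, one positive eigenvalue, I_{p,q} = 1, and one may take ν = v up to sign). Let π = (1/2, 1/2)ᵀ, Δ = vᵀ diag(π) v = (p² + q²)/2, and let Θ be the dense-regime bias matrix Θ := diag(Eπ) v Δ⁻² vᵀ + v Δ⁻² vᵀ diag(Eπ) − v Δ⁻¹ vᵀ diag(π) diag(Eπ) v Δ⁻² vᵀ − v Δ⁻² vᵀ diag(Eπ) diag(π) v Δ⁻¹ vᵀ with E = B ∘ (J − B). Then the diagonal entries of Θ satisfy Θ_11 = −Θ_22, and consequently the asymptotic bias of the spectral-based modularity vanishes: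 π̃ᵀ vech(Θ) = (Θ_11 + Θ_22)/4 = 0. -/
open Matrix
open scoped BigOperators

noncomputable section

/-- Index set for the half-vectorization (vech) of `K × K` symmetric matrices:
pairs `(k, l)` with `l ≤ k`. -/
abbrev VechIdx (K : ℕ) := {p : Fin K × Fin K // p.2 ≤ p.1}

/-- Half-vectorization of a `K × K` matrix. -/
def vech {K : ℕ} (M : Matrix (Fin K) (Fin K) ℝ) : VechIdx K → ℝ :=
  fun p => M p.1.1 p.1.2

/-- The vector `π̃ = vech(diag(π_1², …, π_K²))`. -/
def pitilde {K : ℕ} (π : Fin K → ℝ) : VechIdx K → ℝ :=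
  vech (Matrix.diagonal fun k => π k ^ 2)

/-- The dense-regime bias matrix for the two-block rank-one model `B = v vᵀ`
with `v = (p, q)ᵀ`, balanced communities `π = (1/2, 1/2)ᵀ`, scalar
`Δ = (p² + q²)/2` and `E = B ∘ (J − B)`:
`Θ = diag(Eπ) v Δ⁻² vᵀ + v Δ⁻² vᵀ diag(Eπ)
  − v Δ⁻¹ vᵀ diag(π) diag(Eπ) v Δ⁻² vᵀ − v Δ⁻² vᵀ diag(Eπ) diag(π) v Δ⁻¹ vᵀ`. -/
def thetaRankOne (p q : ℝ) : Matrix (Fin 2) (Fin 2) ℝ :=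
  let v : Fin 2 → ℝ := ![p, q]
  let π : Fin 2 → ℝ := ![1 / 2, 1 / 2]
  let B : Matrix (Fin 2) (Fin 2) ℝ := Matrix.vecMulVec v v
  let E : Matrix (Fin 2) (Fin 2) ℝ := B ⊙ ((Matrix.of fun _ _ => (1 : ℝ)) - B)
  let Δ : ℝ := (p ^ 2 + q ^ 2) / 2
  (Δ⁻¹ * Δ⁻¹) • (Matrix.diagonal (E *ᵥ π) * Matrix.vecMulVec v v)
    + (Δ⁻¹ * Δ⁻¹) • (Matrix.vecMulVec v v * Matrix.diagonal (E *ᵥ π))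
    - (Δ⁻¹ * Δ⁻¹ * Δ⁻¹) •
        (Matrix.vecMulVec v v * Matrix.diagonal π * Matrix.diagonal (E *ᵥ π) *
          Matrix.vecMulVec v v)
    - (Δ⁻¹ * Δ⁻¹ * Δ⁻¹) •
        (Matrix.vecMulVec v v * Matrix.diagonal (E *ᵥ π) * Matrix.diagonal π *
          Matrix.vecMulVec v v)

set_option maxHeartbeats 2000000 in
/-- for the balanced two-block rank-one model, the diagonal
entries of the dense-regime bias matrix `Θ` cancel (`Θ_11 = −Θ_22`), and hence
the asymptotic bias of the spectral-based modularity vanishes: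
`π̃ᵀ vech(Θ) = (Θ_11 + Θ_22)/4 = 0`. -/
theorem rank_one_balanced_bias_cancels (p q : ℝ)
    (hp : 0 < p ∧ p < 1) (hq : 0 < q ∧ q < 1) :
    thetaRankOne p q 1 1 = -(thetaRankOne p q 0 0)
    ∧ pitilde (![1 / 2, 1 / 2] : Fin 2 → ℝ) ⬝ᵥ vech (thetaRankOne p q) =
        (thetaRankOne p q 0 0 + thetaRankOne p q 1 1) / 4
    ∧ pitilde (![1 / 2, 1 / 2] : Fin 2 → ℝ) ⬝ᵥ vech (thetaRankOne p q) = 0 := by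
  obtain ⟨hp1, -⟩ := hp
  obtain ⟨hq1, -⟩ := hq
  have h : p ^ 2 + q ^ 2 ≠ 0 := by positivity
  have key : thetaRankOne p q 1 1 = -(thetaRankOne p q 0 0) := by
    simp only [thetaRankOne, Matrix.sub_apply, Matrix.add_apply, Matrix.smul_apply,
      Matrix.mul_apply, Fin.sum_univ_two, Matrix.diagonal_apply, Matrix.vecMulVec_apply,
      Matrix.hadamard_apply, Matrix.mulVec, dotProduct, Matrix.of_apply,
      Matrix.cons_val_zero, Matrix.cons_val_one, Matrix.head_cons, smul_eq_mul]
    simp only [if_pos rfl, Fin.one_eq_zero_iff, if_neg, one_ne_zero, reduceIte,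
      (by decide : ¬ ((0 : Fin 2) = 1))]
    field_simp
    ring
  have hsum : ∀ f g : VechIdx 2 → ℝ,
      f ⬝ᵥ g = f ⟨(0,0), le_refl _⟩ * g ⟨(0,0), le_refl _⟩
        + f ⟨(1,0), by decide⟩ * g ⟨(1,0), by decide⟩
        + f ⟨(1,1), le_refl _⟩ * g ⟨(1,1), le_refl _⟩ := by
    intro f g
    rw [dotProduct, show (Finset.univ : Finset (VechIdx 2)) =
      {⟨(0,0), le_refl _⟩, ⟨(1,0), by decide⟩, ⟨(1,1), le_refl _⟩} from by decide,
      Finset.sum_insert (by decide), Finset.sum_insert (by decide), Finset.sum_singleton]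
    ring
  have hdot : pitilde (![1 / 2, 1 / 2] : Fin 2 → ℝ) ⬝ᵥ vech (thetaRankOne p q) =
      (thetaRankOne p q 0 0 + thetaRankOne p q 1 1) / 4 := by
    rw [hsum]
    simp only [pitilde, vech, Matrix.diagonal_apply_eq,
      Matrix.diagonal_apply_ne _ (by decide : (0 : Fin 2) ≠ 1),
      Matrix.diagonal_apply_ne _ (by decide : (1 : Fin 2) ≠ 0),
      Matrix.cons_val_zero, Matrix.cons_val_one, Matrix.head_cons]
    ring
  exact ⟨key, hdot, by rw [hdot, key]; ring⟩

end
end
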